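/- (Tikhonov regularization converges to the constrained problem as λ → 0.) Let J : ℝ^N → ℝ be a finite-valued convex function, Φ : ℝ^N → ℝ^P linear, and y ∈ Im(Φ). Let (λ_n) be a sequence of positive reals with λ_n → 0, and for each n let x_n be a minimizer of x ↦ (1/(2λ_n))‖Φx − y‖² + J(x). If x_n converges to some x̄ ∈ ℝ^N, then Φx̄ = y and x̄ minimizes J over {x ∈ ℝ^N : Φx = y}. -/

import Mathlib

open Matrix

/-- Euclidean dot product on `ℝ^n`. -/
noncomputable def dotp {n : ℕ} (u v : Fin n → ℝ) : ℝ := ∑ i, u i * v i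

/-- Euclidean (ℓ²) norm on `ℝ^n`. -/
noncomputable def nrm2 {n : ℕ} (u : Fin n → ℝ) : ℝ := Real.sqrt (∑ i, (u i) ^ 2)

/-- ℓ¹ norm on `ℝ^n`. -/
noncomputable def l1norm {n : ℕ} (u : Fin n → ℝ) : ℝ := ∑ i, |u i|

/-- ℓ^∞ norm of a finitely indexed real vector. -/
noncomputable def linf {ι : Type*} [Fintype ι] (u : ι → ℝ) : ℝ := ⨆ i, |u i|

/-- The sign function: 1 for positive, -1 for negative, 0 at 0. -/
noncomputable def sgn (t : ℝ) : ℝ := if 0 < t then 1 else if t < 0 then -1 else 0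

/-- Subdifferential of a finite-valued function `J : ℝ^n → ℝ` at `x`:
`∂J(x) = {η : J(x+δ) ≥ J(x) + ⟨η,δ⟩ for all δ}`. -/
def subdiff {n : ℕ} (J : (Fin n → ℝ) → ℝ) (x : Fin n → ℝ) : Set (Fin n → ℝ) :=
  {η | ∀ δ, J x + dotp η δ ≤ J (x + δ)}

/-- The model tangent subspace `T_x = Lin(∂J(x))^⊥`, where `Lin(E)` is the linear
space parallel to the affine hull of `E`. -/
def modelT {n : ℕ} (J : (Fin n → ℝ) → ℝ) (x : Fin n → ℝ) : Set (Fin n → ℝ) :=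
  {u | ∀ v ∈ (affineSpan ℝ (subdiff J x)).direction, dotp u v = 0}

/-- Tikhonov regularization converges to the constrained problem
as `λ → 0`: if `y ∈ Im(Φ)`, `λ_n → 0`, `x_n` minimizes
`(1/(2λ_n))‖Φx − y‖² + J(x)` and `x_n → x̄`, then `Φx̄ = y` and `x̄` minimizes
`J` over `{x : Φx = y}`. -/
theorem stmt18 {N P : ℕ} (J : (Fin N → ℝ) → ℝ) (hJ : ConvexOn ℝ Set.univ J)
    (Φ : Matrix (Fin P) (Fin N) ℝ) (y : Fin P → ℝ) (hy : ∃ x, Φ.mulVec x = y)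
    (lam : ℕ → ℝ) (hpos : ∀ n, 0 < lam n)
    (hlim : Filter.Tendsto lam Filter.atTop (nhds 0))
    (xseq : ℕ → Fin N → ℝ)
    (hmin : ∀ n x, (1 / (2 * lam n)) * nrm2 (Φ.mulVec (xseq n) - y) ^ 2 + J (xseq n) ≤
                   (1 / (2 * lam n)) * nrm2 (Φ.mulVec x - y) ^ 2 + J x)
    (xbar : Fin N → ℝ) (hconv : Filter.Tendsto xseq Filter.atTop (nhds xbar)) :
    Φ.mulVec xbar = y ∧ ∀ x, Φ.mulVec x = y → J xbar ≤ J x := by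
  -- continuity of J
  have hJc : Continuous J := by
    have := hJ.continuousOn isOpen_univ
    exact continuousOn_univ.mp this
  have hJlim : Filter.Tendsto (fun n => J (xseq n)) Filter.atTop (nhds (J xbar)) :=
    (hJc.tendsto xbar).comp hconv
  obtain ⟨x0, hx0⟩ := hy
  have hnrm0 : nrm2 (Φ.mulVec x0 - y) = 0 := by
    simp [hx0, nrm2]
  have hkey : ∀ n, (1 / (2 * lam n)) * nrm2 (Φ.mulVec (xseq n) - y) ^ 2 + J (xseq n) ≤ J x0 := by
    intro n
    have := hmin n x0
    simpa [hnrm0] using this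
  have hnn : ∀ n, 0 ≤ nrm2 (Φ.mulVec (xseq n) - y) ^ 2 := fun n => sq_nonneg _
  -- squeeze : a_n ≤ 2 λ_n (J x0 - J (xseq n))
  have hb : ∀ n, nrm2 (Φ.mulVec (xseq n) - y) ^ 2 ≤ 2 * lam n * (J x0 - J (xseq n)) := by
    intro n
    have h1 := hkey n
    have hl : 0 < 2 * lam n := by linarith [hpos n]
    have : (1 / (2 * lam n)) * nrm2 (Φ.mulVec (xseq n) - y) ^ 2 ≤ J x0 - J (xseq n) := by
      linarith
    calc nrm2 (Φ.mulVec (xseq n) - y) ^ 2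
        = (2 * lam n) * ((1 / (2 * lam n)) * nrm2 (Φ.mulVec (xseq n) - y) ^ 2) := by
          rw [← mul_assoc, mul_one_div_cancel hl.ne', one_mul]
      _ ≤ (2 * lam n) * (J x0 - J (xseq n)) := by
          exact mul_le_mul_of_nonneg_left this hl.le
  have hrhs : Filter.Tendsto (fun n => 2 * lam n * (J x0 - J (xseq n))) Filter.atTop (nhds 0) := by
    have : Filter.Tendsto (fun n => 2 * lam n) Filter.atTop (nhds 0) := by
      simpa using hlim.const_mul 2
    simpa using this.mul (Filter.Tendsto.const_sub (J x0) hJlim)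
  have halim : Filter.Tendsto (fun n => nrm2 (Φ.mulVec (xseq n) - y) ^ 2) Filter.atTop (nhds 0) :=
    squeeze_zero hnn hb hrhs
  -- continuity of mulVec and nrm2 ^ 2
  have hmv : Continuous fun x : Fin N → ℝ => Φ.mulVec x :=
    LinearMap.continuous_of_finiteDimensional (Matrix.mulVecLin Φ)
  have hq : Continuous fun u : Fin P → ℝ => nrm2 (u - y) ^ 2 := by
    have h1 : ∀ u : Fin P → ℝ, nrm2 (u - y) ^ 2 = ∑ i, ((u - y) i) ^ 2 := by
      intro u
      rw [nrm2, Real.sq_sqrt (Finset.sum_nonneg fun i _ => sq_nonneg _)]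
    simp only [h1]
    exact continuous_finset_sum _ fun i _ =>
      ((continuous_apply i).sub continuous_const).pow 2
  have halim2 : Filter.Tendsto (fun n => nrm2 (Φ.mulVec (xseq n) - y) ^ 2) Filter.atTop
      (nhds (nrm2 (Φ.mulVec xbar - y) ^ 2)) := by
    exact ((hq.tendsto _).comp ((hmv.tendsto _).comp hconv))
  have heq : nrm2 (Φ.mulVec xbar - y) ^ 2 = 0 := tendsto_nhds_unique halim2 halim
  have hsum : ∑ i, ((Φ.mulVec xbar - y) i) ^ 2 = 0 := by
    rw [nrm2, Real.sq_sqrt (Finset.sum_nonneg fun i _ => sq_nonneg _)] at heq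
    exact heq
  have hΦ : Φ.mulVec xbar = y := by
    funext i
    have := (Finset.sum_eq_zero_iff_of_nonneg (fun i _ => sq_nonneg _)).mp hsum i (Finset.mem_univ i)
    have : (Φ.mulVec xbar - y) i = 0 := by
      exact pow_eq_zero_iff (by norm_num) |>.mp this
    simpa [sub_eq_zero] using this
  refine ⟨hΦ, fun x hx => ?_⟩
  have hJle : ∀ n, J (xseq n) ≤ J x := by
    intro n
    have hx0' : nrm2 (Φ.mulVec x - y) = 0 := by simp [hx, nrm2]
    have := hmin n x
    have hl := hpos n
    have hc : 0 ≤ (1 / (2 * lam n)) * nrm2 (Φ.mulVec (xseq n) - y) ^ 2 :=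
      mul_nonneg (by positivity) (hnn n)
    rw [hx0', show ((0:ℝ))^2 = 0 by norm_num, mul_zero, zero_add] at this
    linarith
  exact le_of_tendsto hJlim (Filter.Eventually.of_forall hJle)
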